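/- If φ is a solution of the Chazy IX equation φ''' = 54φ⁴ + 72φ²φ' + 12(φ')², then x = −φ, y = −(φ² + φ')/φ, z = (8φ³ + 6φφ' − φ'')/(φ² + φ') satisfy the system x' = x(x − y), y' = y(y − 9x − z), z' = z² − 6xy + 14xz, wherever φ, φ² + φ' are nonzero. -/

import Mathlib

theorem chazyIX_to_system (φ φ₁ φ₂ : ℂ → ℂ)
    (hφ : ∀ t, HasDerivAt φ (φ₁ t) t)
    (hφ₁ : ∀ t, HasDerivAt φ₁ (φ₂ t) t)
    (hφ₂ : ∀ t, HasDerivAt φ₂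
      (54 * (φ t) ^ 4 + 72 * (φ t) ^ 2 * φ₁ t + 12 * (φ₁ t) ^ 2) t)
    (x y z : ℂ → ℂ)
    (hx : ∀ t, x t = -φ t)
    (hy : ∀ t, y t = -((φ t) ^ 2 + φ₁ t) / φ t)
    (hz : ∀ t, z t = (8 * (φ t) ^ 3 + 6 * φ t * φ₁ t - φ₂ t) / ((φ t) ^ 2 + φ₁ t))
    (t : ℂ) (h1 : φ t ≠ 0) (h2 : (φ t) ^ 2 + φ₁ t ≠ 0) :
    HasDerivAt x (x t * (x t - y t)) t ∧
    HasDerivAt y (y t * (y t - 9 * x t - z t)) t ∧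
    HasDerivAt z ((z t) ^ 2 - 6 * x t * y t + 14 * x t * z t) t := by
  have hxe : x = fun s => -φ s := funext hx
  have hye : y = fun s => -((φ s) ^ 2 + φ₁ s) / φ s := funext hy
  have hze : z = fun s => (8 * (φ s) ^ 3 + 6 * φ s * φ₁ s - φ₂ s) / ((φ s) ^ 2 + φ₁ s) :=
    funext hz
  have hnum : ∀ s, HasDerivAt (fun u => (φ u) ^ 2 + φ₁ u) (2 * φ s ^ 1 * φ₁ s + φ₂ s) s :=
    fun s => ((hφ s).pow 2).add (hφ₁ s)
  refine ⟨?_, ?_, ?_⟩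
  · rw [hx t, hy t, hxe]
    have := (hφ t).neg
    refine this.congr_deriv ?_
    field_simp
    ring
  · rw [hx t, hy t, hz t, hye]
    have := ((hnum t).neg).div (hφ t) h1
    refine this.congr_deriv ?_
    simp only [Pi.neg_apply]
    field_simp
    ring
  · rw [hx t, hz t, hze]
    have hnum3 : HasDerivAt (fun u => 8 * (φ u) ^ 3 + 6 * φ u * φ₁ u - φ₂ u)
        (8 * (3 * φ t ^ 2 * φ₁ t) + (6 * φ₁ t * φ₁ t + 6 * φ t * φ₂ t) -
          (54 * (φ t) ^ 4 + 72 * (φ t) ^ 2 * φ₁ t + 12 * (φ₁ t) ^ 2)) t := by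
      exact ((((hφ t).pow 3).const_mul 8).add
        (((hφ t).const_mul 6).mul (hφ₁ t))).sub (hφ₂ t)
    have := hnum3.div (hnum t) h2
    refine this.congr_deriv ?_
    rw [hy t]
    field_simp
    ring
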